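/- Let s ≥ 1 be an integer and let F be a nonempty finite subset of ℤ^s. Define E = F ∩ (F−e_1) ∩ ⋯ ∩ (F−e_s), where (e_1,...,e_s) is the canonical basis of ℤ^s. Then |E| ≤ |F| − |F|^{(s−1)/s}. -/

import Mathlib

set_option maxHeartbeats 1000000
open Finset

lemma holder_gm {ι κ : Type*} (T : Finset ι) (A : Finset κ) (hA : A.Nonempty)
    (a : κ → ι → ℝ) (ha : ∀ i t, 0 ≤ a i t) :
    ∑ t ∈ T, ∏ i ∈ A, a i t ^ ((A.card : ℝ)⁻¹) ≤
      ∏ i ∈ A, (∑ t ∈ T, a i t) ^ ((A.card : ℝ)⁻¹) := by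
  set k : ℝ := (A.card : ℝ) with hk
  have hk0 : (0:ℝ) < k := by rw [hk]; exact_mod_cast hA.card_pos
  by_cases hz : ∃ i ∈ A, ∑ t ∈ T, a i t = 0
  · obtain ⟨i, hi, hsum⟩ := hz
    have hzero : ∀ t ∈ T, a i t = 0 := by
      intro t ht
      exact (Finset.sum_eq_zero_iff_of_nonneg (fun t _ => ha i t)).mp hsum t ht
    have : ∑ t ∈ T, ∏ j ∈ A, a j t ^ (k⁻¹) = 0 := by
      apply Finset.sum_eq_zero
      intro t ht
      apply Finset.prod_eq_zero hi
      rw [hzero t ht, Real.zero_rpow (by positivity)]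
    rw [this]
    exact Finset.prod_nonneg fun j _ => Real.rpow_nonneg
      (Finset.sum_nonneg fun t _ => ha j t) _
  · push_neg at hz
    have hS : ∀ i ∈ A, 0 < ∑ t ∈ T, a i t := fun i hi =>
      lt_of_le_of_ne (Finset.sum_nonneg fun t _ => ha i t) (Ne.symm (hz i hi))
    -- divide through
    rw [← div_le_one (Finset.prod_pos fun i hi => Real.rpow_pos_of_pos (hS i hi) _)]
    rw [Finset.sum_div]
    have key : ∀ t ∈ T,
        (∏ i ∈ A, a i t ^ (k⁻¹)) / (∏ i ∈ A, (∑ u ∈ T, a i u) ^ (k⁻¹)) =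
          ∏ i ∈ A, (a i t / ∑ u ∈ T, a i u) ^ (k⁻¹) := by
      intro t ht
      rw [← Finset.prod_div_distrib]
      exact Finset.prod_congr rfl fun i hi => (Real.div_rpow (ha i t)
        (Finset.sum_nonneg fun u _ => ha i u) _).symm
    calc ∑ t ∈ T, (∏ i ∈ A, a i t ^ (k⁻¹)) / (∏ i ∈ A, (∑ u ∈ T, a i u) ^ (k⁻¹))
        = ∑ t ∈ T, ∏ i ∈ A, (a i t / ∑ u ∈ T, a i u) ^ (k⁻¹) :=
          Finset.sum_congr rfl key
      _ ≤ ∑ t ∈ T, ∑ i ∈ A, k⁻¹ * (a i t / ∑ u ∈ T, a i u) := by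
          apply Finset.sum_le_sum
          intro t ht
          exact Real.geom_mean_le_arith_mean_weighted A _ _
            (fun i _ => by positivity) (by
              rw [Finset.sum_const, nsmul_eq_mul, mul_inv_cancel₀ hk0.ne']) 
            (fun i hi => div_nonneg (ha i t) (hS i hi).le)
      _ = ∑ i ∈ A, k⁻¹ * ((∑ t ∈ T, a i t) / ∑ u ∈ T, a i u) := by
          rw [Finset.sum_comm]
          exact Finset.sum_congr rfl fun i hi => by
            rw [← Finset.mul_sum, ← Finset.sum_div]
      _ = 1 := by
          rw [Finset.sum_congr rfl fun i hi => by
            rw [div_self (hS i hi).ne', mul_one]]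
          rw [Finset.sum_const, nsmul_eq_mul, mul_inv_cancel₀ hk0.ne']
lemma loomis_whitney {ι : Type*} [DecidableEq ι] [DecidableEq (ι → ℤ)] (A : Finset ι) :
    ∀ F : Finset (ι → ℤ), F.Nonempty → (∀ x ∈ F, ∀ j ∉ A, x j = 0) →
    (F.card : ℝ) ^ (A.card - 1) ≤
      ∏ i ∈ A, ((F.image fun x => Function.update x i 0).card : ℝ) := by
  induction A using Finset.induction_on with
  | empty => intro F hF hsupp; simp
  | insert _ _ hi₀ _ =>
    rename_i i₀ B IH
    intro F hF hsupp
    rcases B.eq_empty_or_nonempty with hB | hB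
    · subst hB
      simp only [Finset.card_insert_of_notMem (Finset.notMem_empty i₀),
        Finset.card_empty, Finset.prod_insert (Finset.notMem_empty i₀),
        Finset.prod_empty, mul_one]
      have h1 : 1 ≤ (F.image fun x => Function.update x i₀ 0).card :=
        (hF.image _).card_pos
      norm_num
      exact hF
    · set k : ℕ := B.card with hkdef
      have hk1 : 1 ≤ k := hB.card_pos
      have hkR : (0:ℝ) < (k:ℝ) := by exact_mod_cast hk1
      set V : Finset ℤ := F.image (fun x => x i₀) with hV
      set Ft : ℤ → Finset (ι → ℤ) := fun t => F.filter (fun x => x i₀ = t) with hFtdef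
      have cardF : F.card = ∑ t ∈ V, (Ft t).card :=
        Finset.card_eq_sum_card_fiberwise (fun x hx => Finset.mem_image_of_mem _ hx)
      set Gt : ℤ → Finset (ι → ℤ) :=
        fun t => (Ft t).image (fun x => Function.update x i₀ 0) with hGtdef
      have hFtmem : ∀ t, ∀ x ∈ Ft t, x ∈ F ∧ x i₀ = t := by
        intro t x hx; exact Finset.mem_filter.mp hx
      have hGcard : ∀ t, (Gt t).card = (Ft t).card := by
        intro t
        apply Finset.card_image_of_injOn
        intro x hx y hy hxy
        obtain ⟨hxF, hxt⟩ := hFtmem t x hx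
        obtain ⟨hyF, hyt⟩ := hFtmem t y hy
        funext j
        by_cases hj : j = i₀
        · subst hj; rw [hxt, hyt]
        · simpa only [Function.update_of_ne hj] using congrFun hxy j
      have hGsupp : ∀ t, ∀ x ∈ Gt t, ∀ j, j ∉ B → x j = 0 := by
        intro t x hx j hj
        obtain ⟨z, hz, rfl⟩ := Finset.mem_image.mp hx
        by_cases hji : j = i₀
        · subst hji; rw [Function.update_self]
        · rw [Function.update_of_ne hji]
          exact hsupp z (hFtmem t z hz).1 j (by simp [Finset.mem_insert, hji, hj])
      have hFtne : ∀ t ∈ V, (Ft t).Nonempty := by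
        intro t ht
        obtain ⟨x, hx, hxt⟩ := Finset.mem_image.mp ht
        exact ⟨x, Finset.mem_filter.mpr ⟨hx, hxt⟩⟩
      set Q : ι → ℤ → Finset (ι → ℤ) := fun i t =>
        (F.image fun x => Function.update x i 0).filter (fun y => y i₀ = t) with hQdef
      have claim1 : ∀ i ∈ B, ∀ t ∈ V,
          ((Gt t).image (fun x => Function.update x i 0)).card ≤ (Q i t).card := by
        intro i hi t ht
        have hii₀ : i ≠ i₀ := fun h => hi₀ (h ▸ hi)
        have hz0 : ∀ z ∈ (Gt t).image (fun x => Function.update x i 0), z i₀ = 0 := by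
          intro z hz
          obtain ⟨w, hw, rfl⟩ := Finset.mem_image.mp hz
          rw [Function.update_of_ne (Ne.symm hii₀)]
          exact hGsupp t w hw i₀ hi₀
        apply Finset.card_le_card_of_injOn (fun z => Function.update z i₀ t)
        · intro z hz
          obtain ⟨w, hw, rfl⟩ := Finset.mem_image.mp hz
          obtain ⟨x, hx, rfl⟩ := Finset.mem_image.mp hw
          obtain ⟨hxF, hxt⟩ := hFtmem t x hx
          have heq : Function.update (Function.update (Function.update x i₀ 0) i 0) i₀ t
              = Function.update x i 0 := by
            funext j
            by_cases hj : j = i₀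
            · subst hj
              rw [Function.update_self, Function.update_of_ne (Ne.symm hii₀), hxt]
            · rw [Function.update_of_ne hj]
              by_cases hji : j = i
              · subst hji; rw [Function.update_self, Function.update_self]
              · rw [Function.update_of_ne hji, Function.update_of_ne hji,
                  Function.update_of_ne hj]
          beta_reduce
          rw [heq]
          refine Finset.mem_filter.mpr ⟨Finset.mem_image_of_mem _ hxF, ?_⟩
          rw [Function.update_of_ne (Ne.symm hii₀)]
          exact hxt
        · intro z₁ hz₁ z₂ hz₂ h12
          funext j
          by_cases hj : j = i₀
          · subst hj; rw [hz0 z₁ hz₁, hz0 z₂ hz₂]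
          · simpa only [Function.update_of_ne hj] using congrFun h12 j
      have claim2 : ∀ i ∈ B,
          ∑ t ∈ V, (Q i t).card = (F.image fun x => Function.update x i 0).card := by
        intro i hi
        have hii₀ : i ≠ i₀ := fun h => hi₀ (h ▸ hi)
        symm
        apply Finset.card_eq_sum_card_fiberwise
        intro y hy
        obtain ⟨x, hx, rfl⟩ := Finset.mem_image.mp hy
        beta_reduce
        rw [Function.update_of_ne (Ne.symm hii₀)]
        exact Finset.mem_image_of_mem _ hx
      set P : ι → ℝ := fun i => ((F.image fun x => Function.update x i 0).card : ℝ)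
        with hPdef
      have hP : ∀ i, 0 ≤ P i := fun i => Nat.cast_nonneg _
      have stepA : ∀ t ∈ V, ((Ft t).card : ℝ) ≤
          P i₀ ^ ((k:ℝ)⁻¹) * ∏ i ∈ B, ((Q i t).card : ℝ) ^ ((k:ℝ)⁻¹) := by
        intro t ht
        have hIH := IH (Gt t) ((hFtne t ht).image _) (hGsupp t)
        have h1 : ((Ft t).card : ℝ) ^ (k - 1) ≤ ∏ i ∈ B, ((Q i t).card : ℝ) := by
          calc ((Ft t).card:ℝ) ^ (k-1) = ((Gt t).card : ℝ) ^ (B.card - 1) := by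
                rw [hGcard]
            _ ≤ ∏ i ∈ B, (((Gt t).image fun x => Function.update x i 0).card : ℝ) := hIH
            _ ≤ ∏ i ∈ B, ((Q i t).card : ℝ) :=
                Finset.prod_le_prod (fun i _ => by positivity)
                  (fun i hi => by exact_mod_cast claim1 i hi t ht)
        have h2 : ((Ft t).card : ℝ) ≤ P i₀ := by
          have hsub : Gt t ⊆ F.image fun x => Function.update x i₀ 0 :=
            Finset.image_subset_image (Finset.filter_subset _ _)
          have hc := Finset.card_le_card hsub
          rw [hGcard] at hc
          show ((Ft t).card : ℝ) ≤ ((F.image fun x => Function.update x i₀ 0).card : ℝ)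
          exact_mod_cast hc
        have h3 : ((Ft t).card : ℝ) ^ k ≤ P i₀ * ∏ i ∈ B, ((Q i t).card : ℝ) := by
          have hk' : k = (k - 1) + 1 := (Nat.succ_pred_eq_of_pos hk1).symm
          calc ((Ft t).card:ℝ)^k = ((Ft t).card:ℝ) * ((Ft t).card:ℝ)^(k-1) := by
                conv_lhs => rw [hk']
                rw [pow_succ, mul_comm]
            _ ≤ P i₀ * ∏ i ∈ B, ((Q i t).card : ℝ) :=
                mul_le_mul h2 h1 (by positivity) (hP i₀)
        have hroot : ((Ft t).card : ℝ) ≤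
            (P i₀ * ∏ i ∈ B, ((Q i t).card:ℝ)) ^ ((k:ℝ)⁻¹) := by
          have hmono := Real.rpow_le_rpow (by positivity) h3
            (by positivity : (0:ℝ) ≤ (k:ℝ)⁻¹)
          rwa [← Real.rpow_natCast ((Ft t).card:ℝ) k, ← Real.rpow_mul (by positivity),
            mul_inv_cancel₀ hkR.ne', Real.rpow_one] at hmono
        calc ((Ft t).card : ℝ) ≤ (P i₀ * ∏ i ∈ B, ((Q i t).card:ℝ)) ^ ((k:ℝ)⁻¹) := hroot
          _ = P i₀ ^ ((k:ℝ)⁻¹) * ∏ i ∈ B, ((Q i t).card:ℝ) ^ ((k:ℝ)⁻¹) := by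
              rw [Real.mul_rpow (hP i₀) (Finset.prod_nonneg fun i _ => Nat.cast_nonneg _),
                ← Real.finset_prod_rpow B _ (fun i _ => Nat.cast_nonneg _)]
      have main : (F.card : ℝ) ≤ (∏ i ∈ insert i₀ B, P i) ^ ((k:ℝ)⁻¹) := by
        calc (F.card:ℝ) = ∑ t ∈ V, ((Ft t).card:ℝ) := by rw [cardF]; push_cast; rfl
          _ ≤ ∑ t ∈ V, (P i₀ ^ ((k:ℝ)⁻¹) * ∏ i ∈ B, ((Q i t).card:ℝ)^((k:ℝ)⁻¹)) :=
              Finset.sum_le_sum stepA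
          _ = P i₀ ^ ((k:ℝ)⁻¹) * ∑ t ∈ V, ∏ i ∈ B, ((Q i t).card:ℝ)^((k:ℝ)⁻¹) := by
              rw [Finset.mul_sum]
          _ ≤ P i₀ ^ ((k:ℝ)⁻¹) * ∏ i ∈ B, (∑ t ∈ V, ((Q i t).card:ℝ))^((k:ℝ)⁻¹) := by
              refine mul_le_mul_of_nonneg_left ?_ (by positivity)
              exact holder_gm V B hB (fun i t => ((Q i t).card:ℝ))
                (fun i t => Nat.cast_nonneg _)
          _ = P i₀ ^ ((k:ℝ)⁻¹) * ∏ i ∈ B, (P i)^((k:ℝ)⁻¹) := by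
              congr 1
              refine Finset.prod_congr rfl fun i hi => ?_
              congr 1
              show ∑ t ∈ V, ((Q i t).card : ℝ)
                = ((F.image fun x => Function.update x i 0).card : ℝ)
              rw [← Nat.cast_sum]
              exact_mod_cast claim2 i hi
          _ = (∏ i ∈ insert i₀ B, P i) ^ ((k:ℝ)⁻¹) := by
              rw [Finset.prod_insert hi₀,
                Real.mul_rpow (hP i₀) (Finset.prod_nonneg fun i _ => hP i),
                Real.finset_prod_rpow B _ (fun i _ => hP i)]
      have hexp : (insert i₀ B).card - 1 = k := by
        rw [Finset.card_insert_of_notMem hi₀]; omega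
      rw [hexp]
      calc (F.card:ℝ)^k ≤ ((∏ i ∈ insert i₀ B, P i) ^ ((k:ℝ)⁻¹))^k :=
            pow_le_pow_left₀ (by positivity) main k
        _ = ∏ i ∈ insert i₀ B, P i := by
            rw [← Real.rpow_natCast _ k,
              ← Real.rpow_mul (Finset.prod_nonneg fun i _ => hP i),
              inv_mul_cancel₀ hkR.ne', Real.rpow_one]

theorem stmt_11 (s : ℕ) (hs : 1 ≤ s) (F : Finset (Fin s → ℤ)) (hF : F.Nonempty) :
    (((F.filter fun x => ∀ i : Fin s, x + Pi.single i 1 ∈ F).card : ℝ)) ≤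
      (F.card : ℝ) - (F.card : ℝ) ^ (((s : ℝ) - 1) / (s : ℝ)) := by
  classical
  haveI : Nonempty (Fin s) := ⟨⟨0, hs⟩⟩
  set N : ℝ := (F.card : ℝ) with hN
  have hN1 : (1:ℝ) ≤ N := by rw [hN]; exact_mod_cast hF.card_pos
  have hsR : (0:ℝ) < (s:ℝ) := by exact_mod_cast hs
  set c : ℝ := N ^ (((s : ℝ) - 1) / (s : ℝ)) with hc
  have hc0 : 0 < c := Real.rpow_pos_of_pos (lt_of_lt_of_le one_pos hN1) _
  -- Loomis-Whitney
  have hLW : N ^ (s - 1) ≤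
      ∏ i : Fin s, ((F.image fun x => Function.update x i 0).card : ℝ) := by
    have := loomis_whitney (Finset.univ : Finset (Fin s)) F hF (by simp)
    simpa using this
  -- some projection is large
  have hproj : ∃ i : Fin s, c ≤ ((F.image fun x => Function.update x i 0).card : ℝ) := by
    by_contra hcon
    push_neg at hcon
    have hlt : ∏ i : Fin s, ((F.image fun x => Function.update x i 0).card : ℝ)
        < ∏ _i : Fin s, c := by
      apply Finset.prod_lt_prod_of_nonempty
      · intro i _
        exact_mod_cast (hF.image _).card_pos
      · intro i _
        exact hcon i
      · exact Finset.univ_nonempty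
    rw [Finset.prod_const, Finset.card_univ, Fintype.card_fin] at hlt
    have hcs : c ^ s = N ^ (s - 1) := by
      rw [hc, ← Real.rpow_natCast (N ^ (((s:ℝ)-1)/(s:ℝ))) s,
        ← Real.rpow_mul (le_trans zero_le_one hN1),
        div_mul_cancel₀ _ hsR.ne']
      rw [show ((s:ℝ) - 1) = ((s - 1 : ℕ) : ℝ) by
        rw [Nat.cast_sub hs]; norm_num]
      rw [Real.rpow_natCast]
    rw [hcs] at hlt
    exact absurd hLW (not_le.mpr hlt)
  obtain ⟨i, hi⟩ := hproj
  -- projection is at most the number of "bad" points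
  set bad : Finset (Fin s → ℤ) := F.filter (fun x => x + Pi.single i 1 ∉ F) with hbad
  have hsub : (F.image fun x => Function.update x i 0) ⊆
      bad.image fun x => Function.update x i 0 := by
    intro y hy
    obtain ⟨x, hx, rfl⟩ := Finset.mem_image.mp hy
    have hSne : (F.filter fun z => Function.update z i 0 = Function.update x i 0).Nonempty :=
      ⟨x, Finset.mem_filter.mpr ⟨hx, rfl⟩⟩
    obtain ⟨z, hz, hzmax⟩ := Finset.exists_max_image _ (fun z => z i) hSne
    obtain ⟨hzF, hzy⟩ := Finset.mem_filter.mp hz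
    have hznotin : z + Pi.single i 1 ∉ F := by
      intro hin
      have hmem : z + Pi.single i 1 ∈
          F.filter fun w => Function.update w i 0 = Function.update x i 0 := by
        refine Finset.mem_filter.mpr ⟨hin, ?_⟩
        rw [← hzy]
        funext j
        by_cases hj : j = i
        · subst hj; rw [Function.update_self, Function.update_self]
        · rw [Function.update_of_ne hj, Function.update_of_ne hj, Pi.add_apply,
            Pi.single_eq_of_ne hj, add_zero]
      have := hzmax _ hmem
      have h2 : (z + Pi.single i 1 : Fin s → ℤ) i = z i + 1 := by
        rw [Pi.add_apply, Pi.single_eq_same]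
      omega
    exact Finset.mem_image.mpr ⟨z, Finset.mem_filter.mpr ⟨hzF, hznotin⟩, hzy⟩
  have hbadcard : ((F.image fun x => Function.update x i 0).card : ℝ) ≤ (bad.card : ℝ) := by
    exact_mod_cast le_trans (Finset.card_le_card hsub) (Finset.card_image_le)
  have hbadsub : bad ⊆ F.filter (fun x => ¬ ∀ j : Fin s, x + Pi.single j 1 ∈ F) := by
    intro x hx
    obtain ⟨hxF, hxb⟩ := Finset.mem_filter.mp hx
    exact Finset.mem_filter.mpr ⟨hxF, fun hall => hxb (hall i)⟩
  have hpart := Finset.card_filter_add_card_filter_not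
    (s := F) (p := fun x => ∀ j : Fin s, x + Pi.single j 1 ∈ F)
  have hchain : c ≤ ((F.filter fun x => ¬ ∀ j : Fin s, x + Pi.single j 1 ∈ F).card : ℝ) :=
    le_trans hi (le_trans hbadcard (by exact_mod_cast Finset.card_le_card hbadsub))
  have hcast : ((F.filter fun x => ∀ j : Fin s, x + Pi.single j 1 ∈ F).card : ℝ)
      + ((F.filter fun x => ¬ ∀ j : Fin s, x + Pi.single j 1 ∈ F).card : ℝ) = N := by
    rw [hN]; exact_mod_cast hpart
  linarith
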